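/- Let v ∈ ℝ^d be a nonzero vector, β > 0, and let ξ ~ N(0, σ² I_d) with σ = γβ for γ > 0. Then P(⟨v, ξ⟩ ≥ β‖v‖_∞) ≥ (1/√(2π)) · (γ/(dγ² + 1)) · (1 − 1/(2γ²)). -/

import Mathlib

open MeasureTheory ProbabilityTheory Real
open scoped ENNReal

open scoped NNReal

lemma my_exp_eq (a b : ℝ) (ha : 0 < a) (hb : 0 < b) (z x : ℝ) :
    -(x-0)^2 / (2*a) + -(z-x-0)^2 / (2*b)
      = -((a+b)/(2*a*b)) * (x - a*z/(a+b))^2 + -(z-0)^2/(2*(a+b)) := by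
  have h1 : a ≠ 0 := ha.ne'
  have h2 : b ≠ 0 := hb.ne'
  have h3 : a + b ≠ 0 := by positivity
  field_simp
  ring

lemma my_const_eq (a b : ℝ) (ha : 0 < a) (hb : 0 < b) :
    (Real.sqrt (2*π*a))⁻¹ * (Real.sqrt (2*π*b))⁻¹ * Real.sqrt (π / ((a+b)/(2*a*b)))
      = (Real.sqrt (2*π*(a+b)))⁻¹ := by
  have hπ := Real.pi_pos
  rw [← Real.sqrt_inv, ← Real.sqrt_inv, ← Real.sqrt_inv,
    ← Real.sqrt_mul (by positivity), ← Real.sqrt_mul (by positivity)]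
  congr 1
  field_simp

lemma my_pdf_conv (a b : ℝ≥0) (ha : a ≠ 0) (hb : b ≠ 0) (z : ℝ) :
    ∫ x, gaussianPDFReal 0 a x * gaussianPDFReal 0 b (z - x)
      = gaussianPDFReal 0 (a+b) z := by
  have ha' : (0:ℝ) < a := lt_of_le_of_ne a.coe_nonneg (by exact_mod_cast (Ne.symm ha))
  have hb' : (0:ℝ) < b := lt_of_le_of_ne b.coe_nonneg (by exact_mod_cast (Ne.symm hb))
  have hc : (0:ℝ) < (↑a+↑b)/(2*↑a*↑b) := by positivity
  have key : ∀ x : ℝ, gaussianPDFReal 0 a x * gaussianPDFReal 0 b (z - x)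
      = ((Real.sqrt (2*π*a))⁻¹ * (Real.sqrt (2*π*b))⁻¹ * rexp (-(z-0)^2/(2*(↑a+↑b))))
        * rexp (-((↑a+↑b)/(2*↑a*↑b)) * (x - ↑a*z/(↑a+↑b))^2) := by
    intro x
    simp only [gaussianPDFReal]
    rw [mul_mul_mul_comm, ← Real.exp_add, my_exp_eq a b ha' hb' z x, Real.exp_add]
    ring
  simp only [key]
  rw [integral_const_mul]
  rw [integral_sub_right_eq_self (μ := volume)
    (fun x => rexp (-((↑a+↑b)/(2*↑a*↑b)) * x^2)) (↑a*z/(↑a+↑b)),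
    integral_gaussian]
  rw [gaussianPDFReal, NNReal.coe_add]
  rw [show (√(2*π*↑a))⁻¹ * (√(2*π*↑b))⁻¹ * rexp (-(z-0)^2/(2*(↑a+↑b))) * √(π/((↑a+↑b)/(2*↑a*↑b)))
    = ((√(2*π*↑a))⁻¹ * (√(2*π*↑b))⁻¹ * √(π/((↑a+↑b)/(2*↑a*↑b)))) * rexp (-(z-0)^2/(2*(↑a+↑b))) from by ring,
    my_const_eq a b ha' hb']

lemma my_pdf_shift (b : ℝ≥0) (x z : ℝ) :
    gaussianPDFReal x b z = gaussianPDFReal 0 b (z - x) := by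
  simp only [gaussianPDFReal, sub_zero]

lemma my_integrable_conv (a b : ℝ≥0) (ha : a ≠ 0) (hb : b ≠ 0) (z : ℝ) :
    Integrable (fun x => gaussianPDFReal 0 a x * gaussianPDFReal 0 b (z - x)) := by
  have ha' : (0:ℝ) < a := lt_of_le_of_ne a.coe_nonneg (by exact_mod_cast (Ne.symm ha))
  have hb' : (0:ℝ) < b := lt_of_le_of_ne b.coe_nonneg (by exact_mod_cast (Ne.symm hb))
  have hc : (0:ℝ) < (↑a+↑b)/(2*↑a*↑b) := by positivity
  have key : ∀ x : ℝ, gaussianPDFReal 0 a x * gaussianPDFReal 0 b (z - x)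
      = ((Real.sqrt (2*π*a))⁻¹ * (Real.sqrt (2*π*b))⁻¹ * rexp (-(z-0)^2/(2*(↑a+↑b))))
        * rexp (-((↑a+↑b)/(2*↑a*↑b)) * (x - ↑a*z/(↑a+↑b))^2) := by
    intro x
    simp only [gaussianPDFReal]
    rw [mul_mul_mul_comm, ← Real.exp_add, my_exp_eq a b ha' hb' z x, Real.exp_add]
    ring
  simp only [key]
  apply Integrable.const_mul
  have := (integrable_exp_neg_mul_sq hc).comp_sub_right (↑a*z/(↑a+↑b))
  exact this

lemma my_gauss_conv (a b : ℝ≥0) :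
    Measure.map (fun p : ℝ × ℝ => p.1 + p.2) ((gaussianReal 0 a).prod (gaussianReal 0 b))
      = gaussianReal 0 (a + b) := by
  by_cases ha : a = 0
  · subst ha
    rw [gaussianReal_zero_var, Measure.dirac_prod,
      Measure.map_map measurable_add measurable_prodMk_left]
    simp only [Function.comp_def, zero_add]
    rw [Measure.map_id']
  by_cases hb : b = 0
  · subst hb
    rw [gaussianReal_zero_var, Measure.prod_dirac,
      Measure.map_map measurable_add measurable_prodMk_right]
    simp only [Function.comp_def, add_zero]
    rw [Measure.map_id']
  have hab : a + b ≠ 0 := by simp [ha, hb]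
  ext s hs
  rw [Measure.map_apply measurable_add hs, Measure.prod_apply (measurable_add hs)]
  have h1 : ∀ x : ℝ, (gaussianReal 0 b) (Prod.mk x ⁻¹' ((fun p : ℝ × ℝ => p.1 + p.2) ⁻¹' s))
      = ∫⁻ z in s, gaussianPDF x b z := by
    intro x
    have : Prod.mk x ⁻¹' ((fun p : ℝ × ℝ => p.1 + p.2) ⁻¹' s) = (fun y => x + y) ⁻¹' s := rfl
    rw [this, ← Measure.map_apply (measurable_const_add x) hs,
      gaussianReal_map_const_add, zero_add, gaussianReal_apply x hb s]
  simp only [h1]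
  rw [gaussianReal_of_var_ne_zero 0 ha, gaussianReal_apply 0 hab s]
  have hmbU : Measurable (Function.uncurry fun x => gaussianPDF x b) := by
    apply ENNReal.measurable_ofReal.comp
    simp only [gaussianPDFReal]
    fun_prop
  have hmb : Measurable (Function.uncurry fun x z => gaussianPDF 0 a x * gaussianPDF x b z) :=
    ((measurable_gaussianPDF 0 a).comp measurable_fst).mul hmbU
  have hmb2 : ∀ x : ℝ, Measurable fun z => gaussianPDF x b z := fun x =>
    hmbU.of_uncurry_left
  have hmb3 : Measurable fun x => ∫⁻ z in s, gaussianPDF x b z :=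
    Measurable.lintegral_prod_right (ν := volume.restrict s)
      (f := fun x => gaussianPDF x b) hmbU
  rw [lintegral_withDensity_eq_lintegral_mul volume (measurable_gaussianPDF 0 a) hmb3]
  simp only [Pi.mul_apply]
  have hswap : ∫⁻ x, gaussianPDF 0 a x * ∫⁻ z in s, gaussianPDF x b z
      = ∫⁻ z in s, ∫⁻ x, gaussianPDF 0 a x * gaussianPDF x b z := by
    rw [← lintegral_lintegral_swap hmb.aemeasurable]
    congr 1
    ext x
    rw [lintegral_const_mul _ (hmb2 x)]
  rw [hswap]
  congr 1
  ext z
  have ha' : (0:ℝ) < a := lt_of_le_of_ne a.coe_nonneg (by exact_mod_cast (Ne.symm ha))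
  have hb' : (0:ℝ) < b := lt_of_le_of_ne b.coe_nonneg (by exact_mod_cast (Ne.symm hb))
  calc ∫⁻ x, gaussianPDF 0 a x * gaussianPDF x b z
      = ∫⁻ x, ENNReal.ofReal (gaussianPDFReal 0 a x * gaussianPDFReal 0 b (z - x)) := by
        congr 1; ext x
        rw [gaussianPDF, gaussianPDF, my_pdf_shift b x z,
          ← ENNReal.ofReal_mul (gaussianPDFReal_nonneg 0 a x)]
    _ = ENNReal.ofReal (∫ x, gaussianPDFReal 0 a x * gaussianPDFReal 0 b (z - x)) := by
        rw [← ofReal_integral_eq_lintegral_ofReal (my_integrable_conv a b ha hb z)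
          (ae_of_all _ (fun x => mul_nonneg (gaussianPDFReal_nonneg 0 a x)
            (gaussianPDFReal_nonneg 0 b (z - x))))]
    _ = gaussianPDF 0 (a+b) z := by rw [my_pdf_conv a b ha hb z, gaussianPDF]

lemma my_indep_sum {Ω : Type*} [MeasurableSpace Ω] {P : Measure Ω} [IsProbabilityMeasure P]
    {X Y : Ω → ℝ} (hX : Measurable X) (hY : Measurable Y) (h : IndepFun X Y P)
    {a b : ℝ≥0} (hXl : Measure.map X P = gaussianReal 0 a)
    (hYl : Measure.map Y P = gaussianReal 0 b) :
    Measure.map (fun ω => X ω + Y ω) P = gaussianReal 0 (a + b) := by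
  have hp : Measure.map (fun ω => (X ω, Y ω)) P = (Measure.map X P).prod (Measure.map Y P) :=
    (indepFun_iff_map_prod_eq_prod_map_map hX.aemeasurable hY.aemeasurable).mp h
  have heq : (fun ω => X ω + Y ω)
      = (fun p : ℝ × ℝ => p.1 + p.2) ∘ (fun ω => (X ω, Y ω)) := rfl
  rw [heq, ← Measure.map_map measurable_add (hX.prodMk hY), hp, hXl, hYl, my_gauss_conv]

lemma my_sum_law {Ω : Type*} [MeasurableSpace Ω] {P : Measure Ω} [IsProbabilityMeasure P]
    {d : ℕ} {Y : Fin d → Ω → ℝ} (hm : ∀ i, Measurable (Y i))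
    (hindep : iIndepFun Y P)
    {V : Fin d → ℝ≥0} (hl : ∀ i, Measure.map (Y i) P = gaussianReal 0 (V i))
    (s : Finset (Fin d)) :
    Measure.map (fun ω => ∑ i ∈ s, Y i ω) P = gaussianReal 0 (∑ i ∈ s, V i) := by
  classical
  induction s using Finset.induction_on with
  | empty =>
      simp only [Finset.sum_empty]
      rw [Measure.map_const, gaussianReal_zero_var]
      simp
  | @insert i s hi ih =>
      have heq : (fun ω => ∑ j ∈ insert i s, Y j ω)
          = fun ω => Y i ω + ∑ j ∈ s, Y j ω := funext fun ω => Finset.sum_insert hi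
      rw [heq, Finset.sum_insert hi]
      have hsum : Measurable (fun ω => ∑ j ∈ s, Y j ω) :=
        Finset.measurable_sum s fun j _ => hm j
      have hind : IndepFun (Y i) (fun ω => ∑ j ∈ s, Y j ω) P := by
        have h0 := (hindep.indepFun_finsetSum_of_notMem hm hi).symm
        have : (∑ j ∈ s, Y j) = fun ω => ∑ j ∈ s, Y j ω :=
          funext fun ω => Finset.sum_apply ω s Y
        rwa [this] at h0
      exact my_indep_sum (hm i) hsum hind (hl i) ih

noncomputable def myg (V : ℝ≥0) (x : ℝ) : ℝ := rexp (-x^2/(2*V))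

noncomputable def myF (V : ℝ≥0) (x : ℝ) : ℝ := -((V:ℝ)/x) * myg V x

lemma myg_int (V : ℝ≥0) (hV' : (0:ℝ) < V) : Integrable (myg V) := by
  have hgeq : myg V = fun x => rexp (-(1/(2*(V:ℝ)))*x^2) := by
    funext x; unfold myg; congr 1; field_simp
  rw [hgeq]; exact integrable_exp_neg_mul_sq (by positivity)

lemma myg_nonneg (V : ℝ≥0) (x : ℝ) : 0 ≤ myg V x := (Real.exp_pos _).le

lemma myF_deriv (V : ℝ≥0) (hV' : (0:ℝ) < V) (t : ℝ) (ht : 0 < t) :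
    ∀ x ∈ Set.Ici t, HasDerivAt (myF V) ((1 + (V:ℝ)/x^2) * myg V x) x := by
  intro x hx
  have hx0 : x ≠ 0 := (lt_of_lt_of_le ht hx).ne'
  have h1 : HasDerivAt (fun x : ℝ => -((V:ℝ)/x)) ((V:ℝ)/x^2) x := by
    have h := (hasDerivAt_inv hx0).const_mul (-(V:ℝ))
    have he : (fun y : ℝ => -(V:ℝ) * y⁻¹) = fun y : ℝ => -((V:ℝ)/y) := by
      funext y; ring
    rw [he] at h
    refine h.congr_deriv ?_
    field_simp
  have h2 : HasDerivAt (myg V) (-(x/(V:ℝ)) * myg V x) x := by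
    have hu : HasDerivAt (fun x : ℝ => -x^2/(2*(V:ℝ))) (-(x/(V:ℝ))) x := by
      have h := ((hasDerivAt_pow 2 x).const_mul (-(1/(2*(V:ℝ)))))
      have he : (fun y : ℝ => -(1/(2*(V:ℝ))) * y^2) = fun y : ℝ => -y^2/(2*(V:ℝ)) := by
        funext y; ring
      rw [he] at h
      refine h.congr_deriv ?_
      have hxV : (V:ℝ) ≠ 0 := hV'.ne'
      push_cast
      field_simp
    have h3 := hu.exp
    refine h3.congr_deriv ?_
    unfold myg; ring
  have h4 := h1.mul h2
  rw [show myF V = (fun x => -((V:ℝ)/x)) * myg V from rfl]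
  refine h4.congr_deriv ?_
  have hxV : (V:ℝ) ≠ 0 := hV'.ne'
  field_simp
  ring

lemma myF_tendsto (V : ℝ≥0) (hV' : (0:ℝ) < V) :
    Filter.Tendsto (myF V) Filter.atTop (nhds 0) := by
  have h1 : Filter.Tendsto (fun x : ℝ => x⁻¹) Filter.atTop (nhds 0) :=
    tendsto_inv_atTop_zero
  have h2 : Filter.Tendsto (myg V) Filter.atTop (nhds 0) := by
    have hgeq : myg V = fun x => rexp (-(1/(2*(V:ℝ)))*x^2) := by
      funext x; unfold myg; congr 1; field_simp
    rw [hgeq]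
    have hb : Filter.Tendsto (fun x : ℝ => -(1/(2*(V:ℝ)))*x^2) Filter.atTop Filter.atBot := by
      have h3 : Filter.Tendsto (fun x : ℝ => (1/(2*(V:ℝ)))*x^2) Filter.atTop Filter.atTop :=
        (Filter.tendsto_pow_atTop (two_ne_zero)).const_mul_atTop
          (show (0:ℝ) < 1/(2*(V:ℝ)) by positivity)
      have h5 := Filter.tendsto_neg_atTop_atBot.comp h3
      have he : (fun x : ℝ => -(1/(2*(V:ℝ)))*x^2)
          = (fun x : ℝ => -x) ∘ (fun x : ℝ => (1/(2*(V:ℝ)))*x^2) := by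
        funext x; simp only [Function.comp]; ring
      rw [he]
      exact h5
    exact Real.tendsto_exp_atBot.comp hb
  have h6 := ((h1.mul h2).const_mul (-(V:ℝ)))
  have heq : myF V = fun x => -(V:ℝ) * (x⁻¹ * myg V x) := by
    funext x; unfold myF; ring
  rw [heq]
  simpa using h6

set_option maxHeartbeats 1000000 in
lemma my_tail (V : ℝ≥0) (hV : V ≠ 0) (t : ℝ) (ht : 0 < t) :
    ENNReal.ofReal ((Real.sqrt (2*π*V))⁻¹ * (t*V/(t^2+V)) * rexp (-t^2/(2*V)))
      ≤ gaussianReal 0 V {x | t ≤ x} := by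
  have hV' : (0:ℝ) < V := lt_of_le_of_ne V.coe_nonneg (by exact_mod_cast (Ne.symm hV))
  have hst : {x : ℝ | t ≤ x} = Set.Ici t := rfl
  rw [hst, gaussianReal_apply_eq_integral 0 hV]
  apply ENNReal.ofReal_le_ofReal
  have hg_int : Integrable (myg V) := myg_int V hV'
  have hg_nonneg : ∀ x, 0 ≤ myg V x := myg_nonneg V
  have hderiv := myF_deriv V hV' t ht
  have htends := myF_tendsto V hV'
  have hF'int : IntegrableOn (fun x => (1 + (V:ℝ)/x^2) * myg V x) (Set.Ioi t) := by
    apply Integrable.mono' ((hg_int.const_mul (1 + (V:ℝ)/t^2)).integrableOn)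
    · apply AEMeasurable.aestronglyMeasurable
      apply AEMeasurable.mul
      · exact (measurable_const.add
          (measurable_const.div ((measurable_id.pow_const 2)))).aemeasurable
      · exact (hg_int.aestronglyMeasurable.aemeasurable).restrict
    · rw [ae_restrict_iff' measurableSet_Ioi]
      apply Filter.Eventually.of_forall
      intro x hx
      have hx' : t < x := hx
      have hpos : 0 ≤ 1 + (V:ℝ)/x^2 := by positivity
      rw [Real.norm_eq_abs, abs_of_nonneg (mul_nonneg hpos (hg_nonneg x))]
      apply mul_le_mul_of_nonneg_right _ (hg_nonneg x)
      have : (V:ℝ)/x^2 ≤ (V:ℝ)/t^2 := by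
        apply div_le_div_of_nonneg_left V.coe_nonneg (by positivity)
        exact pow_le_pow_left₀ ht.le hx'.le 2
      linarith
  have hFTC : ∫ x in Set.Ioi t, (1 + (V:ℝ)/x^2) * myg V x = (V:ℝ)/t * myg V t := by
    rw [integral_Ioi_of_hasDerivAt_of_tendsto' hderiv hF'int htends]
    unfold myF; ring
  have hmono : ∫ x in Set.Ioi t, (1 + (V:ℝ)/x^2) * myg V x
      ≤ (1 + (V:ℝ)/t^2) * ∫ x in Set.Ioi t, myg V x := by
    rw [← integral_const_mul]
    apply setIntegral_mono_on hF'int ((hg_int.const_mul _).integrableOn) measurableSet_Ioi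
    intro x hx
    apply mul_le_mul_of_nonneg_right _ (hg_nonneg x)
    have : (V:ℝ)/x^2 ≤ (V:ℝ)/t^2 := by
      apply div_le_div_of_nonneg_left V.coe_nonneg (by positivity)
      exact pow_le_pow_left₀ ht.le (le_of_lt hx) 2
    linarith
  have hkey : (V:ℝ)/t * myg V t ≤ (1 + (V:ℝ)/t^2) * ∫ x in Set.Ioi t, myg V x := by
    rw [← hFTC]; exact hmono
  have hI : t*(V:ℝ)/(t^2+V) * myg V t ≤ ∫ x in Set.Ioi t, myg V x := by
    have ht2V : (0:ℝ) < t^2 + V := by positivity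
    have h3 : t*(V:ℝ)/(t^2+V) * myg V t = ((V:ℝ)/t * myg V t) * (t^2/(t^2+(V:ℝ))) := by
      field_simp
    have h4 : ((1 + (V:ℝ)/t^2) * ∫ x in Set.Ioi t, myg V x) * (t^2/(t^2+(V:ℝ)))
        = ∫ x in Set.Ioi t, myg V x := by
      field_simp
    calc t*(V:ℝ)/(t^2+V) * myg V t = ((V:ℝ)/t * myg V t) * (t^2/(t^2+(V:ℝ))) := h3
      _ ≤ ((1 + (V:ℝ)/t^2) * ∫ x in Set.Ioi t, myg V x) * (t^2/(t^2+(V:ℝ))) :=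
          mul_le_mul_of_nonneg_right hkey (by positivity)
      _ = ∫ x in Set.Ioi t, myg V x := h4
  -- conclude
  have hpdf : ∫ x in Set.Ici t, gaussianPDFReal 0 V x
      = (Real.sqrt (2*π*V))⁻¹ * ∫ x in Set.Ioi t, myg V x := by
    rw [MeasureTheory.integral_Ici_eq_integral_Ioi]
    simp only [gaussianPDFReal, sub_zero]
    unfold myg
    rw [integral_const_mul]
  rw [hpdf, mul_assoc]
  apply mul_le_mul_of_nonneg_left _ (by positivity)
  calc t*(V:ℝ)/(t^2+V) * rexp (-t^2/(2*V)) = t*(V:ℝ)/(t^2+V) * myg V t := rfl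
    _ ≤ ∫ x in Set.Ioi t, myg V x := hI

lemma my_real_ineq (d : ℕ) (γ β m w : ℝ) (hγ : 0 < γ) (hβ : 0 < β) (hm : 0 < m)
    (hmw : m ≤ w) (hwd : w^2 ≤ d * m^2) :
    (1 / Real.sqrt (2*π)) * (γ / (d * γ^2 + 1)) * (1 - 1/(2*γ^2))
      ≤ (Real.sqrt (2*π*(w^2*(γ*β)^2)))⁻¹ * ((β*m)*(w^2*(γ*β)^2)/((β*m)^2+(w^2*(γ*β)^2)))
        * rexp (-(β*m)^2/(2*(w^2*(γ*β)^2))) := by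
  have hw : 0 < w := lt_of_lt_of_le hm hmw
  have hπ := Real.pi_pos
  by_cases hcase : 1 - 1/(2*γ^2) ≤ 0
  · have h0 : (1 / Real.sqrt (2*π)) * (γ / (d * γ^2 + 1)) * (1 - 1/(2*γ^2)) ≤ 0 := by
      have hA : 0 ≤ (1 / Real.sqrt (2*π)) * (γ / (d * γ^2 + 1)) := by positivity
      exact mul_nonpos_iff.mpr (Or.inl ⟨hA, hcase⟩)
    exact le_trans h0 (by positivity)
  push_neg at hcase
  have h2π : (0:ℝ) < Real.sqrt (2*π) := Real.sqrt_pos.mpr (by positivity)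
  have h1 : Real.sqrt (2*π*(w^2*(γ*β)^2)) = Real.sqrt (2*π) * (w*(γ*β)) := by
    rw [show 2*π*(w^2*(γ*β)^2) = (2*π)*(w*(γ*β))^2 by ring,
      Real.sqrt_mul (by positivity), Real.sqrt_sq (by positivity)]
  have h2 : -(β*m)^2/(2*(w^2*(γ*β)^2)) = -(m^2)/(2*γ^2*w^2) := by
    field_simp
  have h3 : (Real.sqrt (2*π*(w^2*(γ*β)^2)))⁻¹ * ((β*m)*(w^2*(γ*β)^2)/((β*m)^2+(w^2*(γ*β)^2)))
      = (1 / Real.sqrt (2*π)) * (γ*m*w/(m^2+γ^2*w^2)) := by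
    rw [h1]
    have hden : (0:ℝ) < (β*m)^2+(w^2*(γ*β)^2) := by positivity
    have hden2 : (0:ℝ) < m^2+γ^2*w^2 := by positivity
    field_simp
  rw [h2, h3]
  have h_exp : 1 - 1/(2*γ^2) ≤ rexp (-(m^2)/(2*γ^2*w^2)) := by
    have hle : m^2/(2*γ^2*w^2) ≤ 1/(2*γ^2) := by
      rw [div_le_div_iff₀ (by positivity) (by positivity)]
      have hm2 : m^2 ≤ w^2 := by nlinarith
      nlinarith [mul_le_mul_of_nonneg_left hm2 (show (0:ℝ) ≤ 2*γ^2 by positivity)]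
    have hexp := Real.add_one_le_exp (-(m^2)/(2*γ^2*w^2))
    have : -(m^2)/(2*γ^2*w^2) = -(m^2/(2*γ^2*w^2)) := by ring
    rw [this] at hexp ⊢
    linarith
  have h_frac : γ / (d * γ^2 + 1) ≤ γ*m*w/(m^2+γ^2*w^2) := by
    have hd0 : (0:ℝ) ≤ d := Nat.cast_nonneg d
    rw [div_le_div_iff₀ (by positivity) (by positivity)]
    have hA : m^2 ≤ m*w := by nlinarith
    have hB : w^2 ≤ d*m*w := by nlinarith
    nlinarith [mul_le_mul_of_nonneg_left hA hγ.le,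
      mul_le_mul_of_nonneg_left hB (by positivity : (0:ℝ) ≤ γ^3)]
  apply mul_le_mul (mul_le_mul_of_nonneg_left h_frac (by positivity)) h_exp hcase.le
    (by positivity)

/-- For nonzero v ∈ ℝ^d, β > 0 and ξ ~ N(0, σ²I_d) with σ = γβ (γ > 0):
P(⟨v, ξ⟩ ≥ β‖v‖_∞) ≥ (1/√(2π))·(γ/(dγ²+1))·(1 − 1/(2γ²)).
Here ‖v‖ denotes the sup norm on Fin d → ℝ. -/
theorem gaussian_inner_product_anticoncentration
    {Ω : Type*} [MeasurableSpace Ω] (P : Measure Ω) [IsProbabilityMeasure P]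
    (d : ℕ) (v : Fin d → ℝ) (hv : v ≠ 0) (β γ : ℝ) (hβ : 0 < β) (hγ : 0 < γ)
    (ξ : Fin d → Ω → ℝ) (hmeas : ∀ i, Measurable (ξ i))
    (hindep : iIndepFun ξ P)
    (hlaw : ∀ i, Measure.map (ξ i) P = gaussianReal 0 ⟨(γ * β) ^ 2, sq_nonneg _⟩) :
    ENNReal.ofReal ((1 / Real.sqrt (2 * π)) * (γ / (d * γ ^ 2 + 1)) *
        (1 - 1 / (2 * γ ^ 2))) ≤
      P {ω | β * ‖v‖ ≤ ∑ i, v i * ξ i ω} := by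
  -- law of the weighted sum
  have hYm : ∀ i, Measurable (fun ω => v i * ξ i ω) := fun i => (hmeas i).const_mul (v i)
  have hYindep : iIndepFun (fun i ω => v i * ξ i ω) P :=
    hindep.comp (fun i x => v i * x) (fun i => measurable_const_mul (v i))
  have hYlaw : ∀ i, Measure.map (fun ω => v i * ξ i ω) P
      = gaussianReal 0 ((⟨(v i)^2, sq_nonneg _⟩ * ⟨(γ*β)^2, sq_nonneg _⟩ : ℝ≥0)) := by
    intro i
    have hc : (fun ω => v i * ξ i ω) = (fun x => v i * x) ∘ ξ i := rfl
    rw [hc, ← Measure.map_map (measurable_const_mul (v i)) (hmeas i), hlaw i,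
      ]
    erw [gaussianReal_map_const_mul (v i)]
    simp
    rfl
  have hsum := my_sum_law hYm hYindep hYlaw Finset.univ
  set W : ℝ≥0 := ∑ i : Fin d, (⟨(v i)^2, sq_nonneg _⟩ * ⟨(γ*β)^2, sq_nonneg _⟩ : ℝ≥0)
    with hWdef
  -- variance facts
  have hWr : (W : ℝ) = (∑ i : Fin d, (v i)^2) * (γ*β)^2 := by
    rw [hWdef, NNReal.coe_sum]
    show ∑ i : Fin d, (v i)^2 * (γ*β)^2 = _
    rw [← Finset.sum_mul]
  have hmn : 0 < ‖v‖ := norm_pos_iff.mpr hv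
  have hmw : ‖v‖ ≤ Real.sqrt (∑ i : Fin d, (v i)^2) := by
    apply (pi_norm_le_iff_of_nonneg (Real.sqrt_nonneg _)).mpr
    intro i
    rw [Real.norm_eq_abs, ← Real.sqrt_sq_eq_abs]
    exact Real.sqrt_le_sqrt (Finset.single_le_sum (fun j _ => sq_nonneg (v j))
      (Finset.mem_univ i))
  have hms : ‖v‖^2 ≤ ∑ i : Fin d, (v i)^2 := by
    calc ‖v‖^2 ≤ (Real.sqrt (∑ i : Fin d, (v i)^2))^2 :=
          pow_le_pow_left₀ (norm_nonneg v) hmw 2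
      _ = ∑ i : Fin d, (v i)^2 :=
          Real.sq_sqrt (Finset.sum_nonneg fun j _ => sq_nonneg (v j))
  have hs2pos : 0 < ∑ i : Fin d, (v i)^2 := lt_of_lt_of_le (by positivity) hms
  have hWpos : (0:ℝ) < (W : ℝ) := by rw [hWr]; positivity
  have hW0 : W ≠ 0 := by
    intro h
    rw [h] at hWpos
    simp at hWpos
  -- rewrite the probability through the pushforward
  have hS : Measurable (fun ω => ∑ i, v i * ξ i ω) :=
    Finset.measurable_sum Finset.univ fun i _ => hYm i
  have hmsI : MeasurableSet {x : ℝ | β * ‖v‖ ≤ x} := measurableSet_Ici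
  have hset : {ω | β * ‖v‖ ≤ ∑ i, v i * ξ i ω}
      = (fun ω => ∑ i, v i * ξ i ω) ⁻¹' {x | β * ‖v‖ ≤ x} := rfl
  rw [hset, ← Measure.map_apply hS hmsI, hsum]
  -- apply the tail bound
  have ht : 0 < β * ‖v‖ := mul_pos hβ hmn
  refine le_trans ?_ (my_tail W hW0 (β * ‖v‖) ht)
  apply ENNReal.ofReal_le_ofReal
  -- reduce to the real inequality
  have hw2 : (Real.sqrt (∑ i : Fin d, (v i)^2))^2 = ∑ i : Fin d, (v i)^2 :=
    Real.sq_sqrt hs2pos.le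
  have hWr2 : (W : ℝ) = (Real.sqrt (∑ i : Fin d, (v i)^2))^2 * (γ*β)^2 := by
    rw [hw2, hWr]
  have hwd : (Real.sqrt (∑ i : Fin d, (v i)^2))^2 ≤ d * ‖v‖^2 := by
    rw [hw2]
    have hb : ∀ i : Fin d, (v i)^2 ≤ ‖v‖^2 := fun i => by
      have h := norm_le_pi_norm v i
      rw [Real.norm_eq_abs] at h
      calc (v i)^2 = |v i|^2 := (sq_abs _).symm
        _ ≤ ‖v‖^2 := pow_le_pow_left₀ (abs_nonneg _) h 2
    calc (∑ i : Fin d, (v i)^2) ≤ ∑ _i : Fin d, ‖v‖^2 :=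
          Finset.sum_le_sum fun i _ => hb i
      _ = d * ‖v‖^2 := by rw [Finset.sum_const, Finset.card_univ, Fintype.card_fin,
            nsmul_eq_mul]
  have hkey := my_real_ineq d γ β ‖v‖ (Real.sqrt (∑ i : Fin d, (v i)^2)) hγ hβ hmn hmw hwd
  rw [hWr2]
  exact hkey
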